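/- Let q = 3^m. For every b ∈ F_{q^2}^*, the number of u ∈ F_{q^2} with 2u^{q+1} + u^2 = b equals 2 if Tr_{F_{q^2}/F_q}(b) is a nonsquare in F_q, and equals 0 if Tr_{F_{q^2}/F_q}(b) is a square in F_q (including zero trace). -/

import Mathlib

/-- For q = 3^m and b ∈ F_{q²}^*, δ(b) = 2 if Tr_{F_{q²}/F_q}(b) is a nonsquare
of F_q, and δ(b) = 0 if it is a square (possibly zero). -/
theorem delta_char_three (m q : ℕ) (hm : 0 < m) (hq : q = 3 ^ m)
    (F K : Type*) [Field F] [Field K] [Algebra F K] [Fintype F] [Fintype K]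
    (hF : Fintype.card F = q) (hK : Fintype.card K = q ^ 2)
    (b : K) (hb : b ≠ 0) :
    (¬ IsSquare (Algebra.trace F K b) →
      Nat.card {u : K // 2 * u ^ (q + 1) + u ^ 2 = b} = 2) ∧
    (IsSquare (Algebra.trace F K b) →
      Nat.card {u : K // 2 * u ^ (q + 1) + u ^ 2 = b} = 0) := by
  classical
  have hq1 : 1 < q := by
    rw [hq]; exact Nat.one_lt_pow hm.ne' (by norm_num)
  -- characteristic 3
  haveI h3 : Fact (Nat.Prime 3) := ⟨by norm_num⟩
  obtain ⟨p, hp⟩ := CharP.exists K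
  haveI := hp
  obtain ⟨n, hpprime, hcard⟩ := FiniteField.card K p
  have hp3 : p = 3 := by
    have h1 : p ∣ 3 ^ (m * 2) := by
      have h2 : p ∣ Fintype.card K := hcard ▸ dvd_pow_self p n.pos.ne'
      rwa [hK, hq, ← pow_mul] at h2
    have h4 := hpprime.dvd_of_dvd_pow h1
    exact (Nat.prime_dvd_prime_iff_eq hpprime (by norm_num)).mp h4
  subst hp3
  haveI hK3 : CharP K 3 := hp
  haveI hF3 : CharP F 3 := (algebraMap F K).charP (algebraMap F K).injective 3
  haveI : ExpChar K 3 := ExpChar.prime (by norm_num)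
  have h3K : (3 : K) = 0 := by exact_mod_cast CharP.cast_eq_zero K 3
  have h2K : (2 : K) ≠ 0 := by
    intro h
    have : (1 : K) = 0 := by linear_combination h3K - h
    exact one_ne_zero this
  have hchF : ringChar F ≠ 2 := by rw [ringChar.eq F 3]; norm_num
  have hchK : ringChar K ≠ 2 := by rw [ringChar.eq K 3]; norm_num
  have hne1F : (-1 : F) ≠ 1 := by
    intro h
    have h3F : (3 : F) = 0 := by exact_mod_cast CharP.cast_eq_zero F 3
    have : (1 : F) = 0 := by linear_combination h3F + h
    exact one_ne_zero this
  -- powers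
  have hqodd : Odd q := by rw [hq]; exact Odd.pow (by decide)
  obtain ⟨k, hk⟩ := hqodd
  have hk0 : 0 < k := by omega
  have hFq : ∀ a : F, a ^ q = a := fun a => by rw [← hF]; exact FiniteField.pow_card a
  have hKq2 : ∀ x : K, (x ^ q) ^ q = x := fun x => by
    rw [← pow_mul, ← pow_two, ← hK]; exact FiniteField.pow_card x
  have hsub : ∀ x y : K, (x - y) ^ q = x ^ q - y ^ q := fun x y => by
    rw [hq]; exact sub_pow_expChar_pow x y m
  -- the Frobenius as an algebra equivalence
  have hfrobmap : ∀ x : K, iterateFrobenius K 3 m x = x ^ q := fun x => by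
    rw [iterateFrobenius_def, hq]
  let φ₀ : K →ₐ[F] K :=
    { iterateFrobenius K 3 m with
      commutes' := fun a => by
        show iterateFrobenius K 3 m (algebraMap F K a) = algebraMap F K a
        rw [hfrobmap, ← map_pow, hFq] }
  have hφ₀ : ∀ x : K, φ₀ x = x ^ q := hfrobmap
  have hinj : Function.Injective φ₀ := RingHom.injective (φ₀ : K →+* K)
  let φ : K ≃ₐ[F] K := AlgEquiv.ofBijective φ₀ (Finite.injective_iff_bijective.mp hinj)
  have hφ : ∀ x : K, φ x = x ^ q := hφ₀
  have hφne : φ ≠ 1 := by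
    obtain ⟨g, hg⟩ := IsCyclic.exists_generator (α := Kˣ)
    have hgord : orderOf g = q ^ 2 - 1 := by
      rw [orderOf_eq_card_of_forall_mem_zpowers hg, Nat.card_eq_fintype_card,
        Fintype.card_units, hK]
    intro hcontra
    have hgq : (g : K) ^ q = (g : K) := by
      have := congrArg (fun ψ : K ≃ₐ[F] K => ψ (g : K)) hcontra
      simpa [hφ] using this
    have hgu : g ^ q = g := Units.ext (by push_cast; exact hgq)
    have : g ^ (q - 1) = 1 := by
      have h5 : g ^ (q - 1) * g = g := by
        rw [← pow_succ, Nat.sub_add_cancel hq1.le, hgu]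
      exact mul_right_cancel (by rw [h5, one_mul])
    have hdvd := orderOf_dvd_of_pow_eq_one this
    rw [hgord] at hdvd
    have h7 := Nat.le_of_dvd (by omega) hdvd
    have h8 : q ^ 2 ≤ q := by omega
    nlinarith
  have hcardG : Fintype.card (K ≃ₐ[F] K) = 2 := by
    rw [← Nat.card_eq_fintype_card, IsGalois.card_aut_eq_finrank]
    have h6 : q ^ 2 = q ^ Module.finrank F K := by rw [← hK, ← hF]; exact Module.card_eq_pow_finrank
    exact (Nat.pow_right_injective hq1 h6).symm
  have huniv : (Finset.univ : Finset (K ≃ₐ[F] K)) = {1, φ} := by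
    classical
    symm
    apply Finset.eq_univ_of_card
    rw [hcardG, Finset.card_insert_of_notMem (by simpa using hφne.symm), Finset.card_singleton]
  have htr : ∀ x : K, algebraMap F K (Algebra.trace F K x) = x + x ^ q := fun x => by
    classical
    rw [trace_eq_sum_automorphisms, huniv, Finset.sum_pair (Ne.symm hφne)]
    simp [hφ]
  have hqodd' : Odd q := ⟨k, by omega⟩
  -- equation rewriting
  have heq : ∀ v : K, (2 * v ^ (q + 1) + v ^ 2 = b) ↔ v * (v - v ^ q) = b := by
    intro v
    constructor
    · intro h; linear_combination h - v ^ q * v * h3K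
    · intro h; linear_combination h + v ^ q * v * h3K
  set t : F := Algebra.trace F K b with htdef
  have htrb : algebraMap F K t = b + b ^ q := htr b
  have key : ∀ v : K, v * (v - v ^ q) = b →
      (v - v ^ q) ^ q = -(v - v ^ q) ∧ (v - v ^ q) ≠ 0 ∧
        algebraMap F K t = (v - v ^ q) ^ 2 := by
    intro v hv
    have hw1 : (v - v ^ q) ^ q = -(v - v ^ q) := by
      rw [hsub, hKq2]; ring
    have hw0 : (v - v ^ q) ≠ 0 := by
      intro h0; exact hb (by rw [← hv, h0, mul_zero])
    refine ⟨hw1, hw0, ?_⟩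
    rw [htrb, ← hv, mul_pow, hw1]
    ring
  have hsolNS : (∃ u : K, 2 * u ^ (q + 1) + u ^ 2 = b) → t ^ k = -1 := by
    rintro ⟨u, hu⟩
    obtain ⟨hw1, hw0, hw3⟩ := key u ((heq u).mp hu)
    have hwq1 : (u - u ^ q) ^ (2 * k) = -1 := by
      have e1 : (u - u ^ q) ^ (2 * k) * (u - u ^ q) = -1 * (u - u ^ q) := by
        rw [← pow_succ]
        have e0 : 2 * k + 1 = q := by omega
        rw [e0, hw1]; ring
      exact mul_right_cancel₀ hw0 e1
    have e3 : algebraMap F K (t ^ k) = algebraMap F K (-1) := by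
      rw [map_pow, hw3, ← pow_mul, map_neg, map_one]
      exact hwq1
    exact (algebraMap F K).injective e3
  have htk_nonsq : t ^ k = -1 → ¬ IsSquare t := by
    intro htk hsq
    have ht0 : t ≠ 0 := by
      intro h0; rw [h0, zero_pow hk0.ne'] at htk
      exact (neg_ne_zero.mpr one_ne_zero) htk.symm
    rw [FiniteField.isSquare_iff hchF ht0, hF] at hsq
    have hqk : q / 2 = k := by omega
    rw [hqk, htk] at hsq
    exact hne1F hsq
  constructor
  · -- nonsquare case: 2 solutions
    intro hns
    have ht0 : t ≠ 0 := fun h0 => hns (h0 ▸ ⟨0, (mul_zero 0).symm⟩)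
    have htq : t ^ (q - 1) = 1 := by
      have e1 : t ^ (q - 1) * t = 1 * t := by
        rw [← pow_succ, Nat.sub_add_cancel hq1.le, hFq, one_mul]
      exact mul_right_cancel₀ ht0 e1
    have hsqK : IsSquare (algebraMap F K t) := by
      have hmap0 : algebraMap F K t ≠ 0 := by
        intro h0
        exact ht0 ((algebraMap F K).injective (by rw [h0, map_zero]))
      rw [FiniteField.isSquare_iff hchK hmap0, hK]
      have harith : q ^ 2 / 2 = (q - 1) * (k + 1) := by
        have e2 : q ^ 2 = 2 * ((q - 1) * (k + 1)) + 1 := by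
          have hq2 : q = 2 * k + 1 := by omega
          have hq3 : q - 1 = 2 * k := by omega
          rw [hq3, hq2]; ring
        omega
      rw [harith, pow_mul, ← map_pow, htq, map_one, one_pow]
    obtain ⟨s, hs⟩ := hsqK
    have hs2 : s ^ 2 = algebraMap F K t := by rw [sq, ← hs]
    have hs0 : s ≠ 0 := by
      intro h0
      apply ht0
      refine (algebraMap F K).injective ?_
      rw [map_zero, ← hs2, h0]; ring
    have hsq2 : (s ^ q) ^ 2 = s ^ 2 := by
      rw [← pow_mul, mul_comm q 2, pow_mul, hs2, ← map_pow, hFq, ← hs2]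
    have hscases : s ^ q = s ∨ s ^ q = -s := by
      have e4 : (s ^ q - s) * (s ^ q + s) = 0 := by linear_combination hsq2
      rcases mul_eq_zero.mp e4 with h | h
      · left; linear_combination h
      · right; linear_combination h
    rcases hscases with hfix | hsqneg
    · exfalso
      have hs2k : s ^ (2 * k) = 1 := by
        have e1 : s ^ (2 * k) * s = 1 * s := by
          rw [← pow_succ, one_mul]
          have e0 : 2 * k + 1 = q := by omega
          rw [e0, hfix]
        exact mul_right_cancel₀ hs0 e1
      have e3 : algebraMap F K (t ^ k) = algebraMap F K 1 := by
        rw [map_pow, ← hs2, ← pow_mul, map_one, hs2k]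
      have htk1 : t ^ k = 1 := (algebraMap F K).injective e3
      apply hns
      rw [FiniteField.isSquare_iff hchF ht0, hF]
      have hqk : q / 2 = k := by omega
      rw [hqk]; exact htk1
    · -- construct the two solutions
      set u0 : K := b / s with hu0def
      have hbq : b ^ q = s ^ 2 - b := by linear_combination - htrb - hs2
      have hu0 : u0 * (u0 - u0 ^ q) = b := by
        have e1 : u0 - u0 ^ q = s := by
          rw [hu0def, div_pow, hbq, hsqneg, div_neg, sub_neg_eq_add, ← add_div,
            show b + (s ^ 2 - b) = s * s by ring, mul_div_assoc, div_self hs0, mul_one]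
        rw [e1, hu0def, div_mul_cancel₀ _ hs0]
      have hu0' : (-u0) * ((-u0) - (-u0) ^ q) = b := by
        rw [Odd.neg_pow hqodd']
        linear_combination hu0
      have hu00 : u0 ≠ 0 := div_ne_zero hb hs0
      have hneq : u0 ≠ -u0 := by
        intro h
        apply hu00
        have e5 : 2 * u0 = 0 := by linear_combination h
        rcases mul_eq_zero.mp e5 with h' | h'
        · exact absurd h' h2K
        · exact h'
      have hchar : ∀ v : K, (2 * v ^ (q + 1) + v ^ 2 = b) ↔ (v = u0 ∨ v = -u0) := by
        intro v
        rw [heq v]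
        constructor
        · intro hv
          obtain ⟨hw1, hw0, hw3⟩ := key v hv
          have hww : (v - v ^ q - s) * (v - v ^ q + s) = 0 := by
            linear_combination - hw3 - hs2
          rcases mul_eq_zero.mp hww with h | h
          · left
            have hws : v - v ^ q = s := by linear_combination h
            rw [hu0def, eq_div_iff hs0]
            rw [hws] at hv
            exact hv
          · right
            have hws : v - v ^ q = -s := by linear_combination h
            have hv' : v * (-s) = b := by rw [← hws]; exact hv
            have : v = b / (-s) := by
              rw [eq_div_iff (neg_ne_zero.mpr hs0)]; exact hv'
            rw [this, div_neg, hu0def]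
        · rintro (rfl | rfl)
          · exact hu0
          · exact hu0'
      have hsetEq : {u : K | 2 * u ^ (q + 1) + u ^ 2 = b} = {u0, -u0} := by
        ext v
        simp only [Set.mem_setOf_eq, Set.mem_insert_iff, Set.mem_singleton_iff]
        exact hchar v
      have hcc : Nat.card {u : K // 2 * u ^ (q + 1) + u ^ 2 = b}
          = Nat.card ↥({u0, -u0} : Set K) := by
        rw [← hsetEq]; rfl
      rw [hcc, Nat.card_coe_set_eq, Set.ncard_pair hneq]
  · -- square case: no solutions
    intro hsq
    haveI : IsEmpty {u : K // 2 * u ^ (q + 1) + u ^ 2 = b} := by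
      refine ⟨fun x => ?_⟩
      exact htk_nonsq (hsolNS ⟨x.1, x.2⟩) hsq
    exact Nat.card_of_isEmpty
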